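/- Let X be a topological space and let F̃ be a fine presheaf of K-vector spaces on X (i.e. for every finite open covering (U_i) there exist closed sets F_i ⊆ U_i and presheaf endomorphisms ℓ̃_i with ℓ̃_i = 0 on F̃(U) whenever U ∩ F_i = ∅, and Σ_i ℓ̃_i = id). If X is compact and F̃ satisfies the surjectivity property (for every x ∈ X, the map F̃(X) → F_x to the stalk of the associated sheaf F is surjective), then the natural map F̃(X) → Γ(X, F) to global sections of the sheafification is surjective. If F̃ moreover satisfies the injectivity property (F̃(X) → ∏_x F_x is injective), this map is an isomorphism. -/
import Mathlib


/-!
Statement 4 (Proposition A.1 of the paper): let `F̃` be a fine presheaf of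
`K`-vector spaces on a compact topological space `X` satisfying the
surjectivity property (`F̃(X) → F_x` is onto for every stalk of the associated
sheaf `F`).  Then the natural map `F̃(X) → Γ(X, F)` to the global sections of
the sheafification is surjective; if moreover `F̃(X) → ∏_x F_x` is injective,
it is an isomorphism.

We use a concrete presheaf framework: stalks are germ classes, and global
sections of the sheafification are families of germs that are locally
represented by presheaf sections.
-/

open TopologicalSpace

namespace Stmt4

/-- A presheaf of `K`-vector spaces on `X`. -/
structure Psh (K : Type) [Field K] (X : Type) [TopologicalSpace X] where
  sec : Opens X → Type
  [acg : ∀ U, AddCommGroup (sec U)]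
  [mod : ∀ U, Module K (sec U)]
  res : ∀ {U V : Opens X}, V ≤ U → sec U →ₗ[K] sec V
  res_rfl : ∀ (U : Opens X) (s : sec U), res (le_refl U) s = s
  res_res : ∀ {U V W : Opens X} (hVU : V ≤ U) (hWV : W ≤ V) (s : sec U),
      res hWV (res hVU s) = res (hWV.trans hVU) s

attribute [instance] Psh.acg Psh.mod

variable {K : Type} [Field K] {X : Type} [TopologicalSpace X]

/-- The germ relation at `x`. -/
def germSetoid (F : Psh K X) (x : X) :
    Setoid (Σ U : {U : Opens X // x ∈ U}, F.sec U.1) where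
  r a b := ∃ (W : Opens X) (hxW : x ∈ W) (h1 : W ≤ a.1.1) (h2 : W ≤ b.1.1),
    F.res h1 a.2 = F.res h2 b.2
  iseqv := by
    constructor
    · rintro ⟨U, s⟩
      exact ⟨U.1, U.2, le_rfl, le_rfl, rfl⟩
    · rintro a b ⟨W, hxW, h1, h2, h⟩
      exact ⟨W, hxW, h2, h1, h.symm⟩
    · rintro a b c ⟨W, hxW, h1, h2, h⟩ ⟨W', hxW', h1', h2', h'⟩
      refine ⟨W ⊓ W', ⟨hxW, hxW'⟩, inf_le_left.trans h1, inf_le_right.trans h2', ?_⟩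
      rw [← F.res_res h1 inf_le_left, ← F.res_res h2' inf_le_right, h, ← h',
        F.res_res, F.res_res]

/-- The stalk of (the sheafification of) `F` at `x`. -/
def Stalk (F : Psh K X) (x : X) : Type := Quotient (germSetoid F x)

/-- The germ of a section at a point. -/
def germ (F : Psh K X) {U : Opens X} (x : X) (hx : x ∈ U) (s : F.sec U) :
    Stalk F x := Quotient.mk _ ⟨⟨U, hx⟩, s⟩

/-- Global sections of the sheafification: families of germs locally
represented by presheaf sections. -/
def Gsh (F : Psh K X) : Type :=
  {σ : ∀ x : X, Stalk F x //
    ∀ x : X, ∃ (U : Opens X) (_ : x ∈ U) (s : F.sec U),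
      ∀ y (hy : y ∈ U), σ y = germ F y hy s}

/-- The natural map from global presheaf sections to global sections of the
sheafification. -/
def toGsh (F : Psh K X) (s : F.sec ⊤) : Gsh F :=
  ⟨fun x => germ F x (Opens.mem_top x) s, fun y => ⟨⊤, Opens.mem_top y, s, fun _ _ => rfl⟩⟩

lemma germ_eq (F : Psh K X) {U V : Opens X} {x : X} (hxU : x ∈ U) (hxV : x ∈ V)
    {s : F.sec U} {t : F.sec V} (W : Opens X) (hxW : x ∈ W) (h1 : W ≤ U) (h2 : W ≤ V)
    (h : F.res h1 s = F.res h2 t) : germ F x hxU s = germ F x hxV t :=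
  Quotient.sound ⟨W, hxW, h1, h2, h⟩

lemma germ_exact (F : Psh K X) {U V : Opens X} {x : X} (hxU : x ∈ U) (hxV : x ∈ V)
    {s : F.sec U} {t : F.sec V} (h : germ F x hxU s = germ F x hxV t) :
    ∃ (W : Opens X) (_ : x ∈ W) (h1 : W ≤ U) (h2 : W ≤ V),
      F.res h1 s = F.res h2 t :=
  Quotient.exact h

theorem fine_presheaf_sections_of_sheafification
    [CompactSpace X] (F : Psh K X)
    -- `F̃` is a fine presheaf: for every finite open covering there are closed
    -- sets `F_i ⊆ U_i` and endomorphisms `ℓ_i` of the presheaf, vanishing on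
    -- opens missing `F_i`, summing to the identity
    (hfine : ∀ (ι : Type) [Fintype ι] (U : ι → Opens X), (⨆ i, U i) = ⊤ →
      ∃ (Fc : ι → Set X), (∀ i, IsClosed (Fc i) ∧ Fc i ⊆ (U i : Set X)) ∧
      ∃ ℓ : ι → ∀ V : Opens X, F.sec V →ₗ[K] F.sec V,
        (∀ i (V W : Opens X) (h : W ≤ V) (s : F.sec V),
          F.res h (ℓ i V s) = ℓ i W (F.res h s)) ∧
        (∀ i (V : Opens X), (V : Set X) ∩ Fc i = ∅ → ∀ s : F.sec V, ℓ i V s = 0) ∧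
        (∀ (V : Opens X) (s : F.sec V), ∑ i, ℓ i V s = s))
    -- the surjectivity property: `F̃(X) → F_x` is onto for every `x`
    (hsurj : ∀ x : X, Function.Surjective
      (fun s : F.sec ⊤ => germ F x (Opens.mem_top x) s)) :
    Function.Surjective (toGsh F) ∧
    -- with the injectivity property, it is an isomorphism
    ((Function.Injective fun s : F.sec ⊤ =>
        (fun x : X => germ F x (Opens.mem_top x) s : ∀ x : X, Stalk F x)) →
      Function.Bijective (toGsh F)) := by
  have surj : Function.Surjective (toGsh F) := by
    intro σ
    -- refine the local representations to ones by global sections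
    have key : ∀ x : X, ∃ (V : Opens X) (_ : x ∈ V) (g : F.sec ⊤),
        ∀ y (hy : y ∈ V), σ.1 y = germ F y (Opens.mem_top y) g := by
      intro x
      obtain ⟨U, hxU, s, hs⟩ := σ.2 x
      obtain ⟨g, hgx⟩ := hsurj x (σ.1 x)
      have heq : germ F x (Opens.mem_top x) g = germ F x hxU s := by
        rw [show germ F x (Opens.mem_top x) g = σ.1 x from hgx, hs x hxU]
      obtain ⟨W, hxW, h1, h2, h⟩ := germ_exact F _ _ heq
      refine ⟨W, hxW, g, fun y hy => ?_⟩
      rw [hs y (h2 hy)]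
      exact (germ_eq F _ _ W hy h1 h2 h).symm
    choose V hxV g hg using key
    -- finite subcover
    obtain ⟨t, ht⟩ := IsCompact.elim_finite_subcover isCompact_univ
      (fun x => (V x : Set X)) (fun x => (V x).2)
      (fun y _ => Set.mem_iUnion.2 ⟨y, hxV y⟩)
    set ι := {x : X // x ∈ t}
    have htop : (⨆ i : ι, V i.1) = ⊤ := by
      apply le_antisymm le_top
      intro x _
      obtain ⟨y, hy⟩ := Set.mem_iUnion.1 (ht (Set.mem_univ x))
      obtain ⟨hyt, hxy⟩ := Set.mem_iUnion.1 hy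
      exact Opens.mem_iSup.2 ⟨⟨y, hyt⟩, hxy⟩
    obtain ⟨Fc, hFc, ℓ, hres, hvan, hsum⟩ := hfine ι (fun i => V i.1) htop
    refine ⟨∑ i : ι, ℓ i ⊤ (g i.1), Subtype.ext (funext fun x => ?_)⟩
    -- pick j with x ∈ V j
    obtain ⟨y, hy⟩ := Set.mem_iUnion.1 (ht (Set.mem_univ x))
    obtain ⟨hyt, hxy⟩ := Set.mem_iUnion.1 hy
    set j : ι := ⟨y, hyt⟩
    -- for each i, find a neighborhood of x where ℓ i acts the same on g i and g j
    have claim : ∀ i : ι, ∃ Wi : Opens X, x ∈ Wi ∧ ∀ (W : Opens X), W ≤ Wi →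
        ℓ i W (F.res le_top (g i.1)) = ℓ i W (F.res le_top (g j.1)) := by
      intro i
      by_cases hxi : x ∈ V i.1
      · have heq : germ F x (Opens.mem_top x) (g i.1)
            = germ F x (Opens.mem_top x) (g j.1) := by
          rw [← hg i.1 x hxi, ← hg j.1 x hxy]
        obtain ⟨W', hxW', h1, h2, h⟩ := germ_exact F _ _ heq
        refine ⟨W', hxW', fun W hW => ?_⟩
        have : F.res (le_top : W ≤ ⊤) (g i.1) = F.res (le_top : W ≤ ⊤) (g j.1) := by
          rw [← F.res_res h1 hW, ← F.res_res h2 hW, h]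
        rw [this]
      · have hxF : x ∉ Fc i := fun hx => hxi ((hFc i).2 hx)
        refine ⟨⟨(Fc i)ᶜ, (hFc i).1.isOpen_compl⟩, hxF, fun W hW => ?_⟩
        have hdisj : (W : Set X) ∩ Fc i = ∅ := by
          apply Set.eq_empty_of_forall_notMem
          rintro z ⟨hz1, hz2⟩
          exact (hW hz1) hz2
        rw [hvan i W hdisj, hvan i W hdisj]
    choose Wi hxWi hWi using claim
    set W : Opens X := ⟨⋂ i : ι, (Wi i : Set X), isOpen_iInter_of_finite fun i => (Wi i).2⟩
    have hxW : x ∈ W := Set.mem_iInter.2 fun i => hxWi i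
    have hWle : ∀ i : ι, W ≤ Wi i := fun i z hz => Set.mem_iInter.1 hz i
    show germ F x (Opens.mem_top x) (∑ i : ι, ℓ i ⊤ (g i.1)) = σ.1 x
    rw [hg j.1 x hxy]
    apply germ_eq F _ _ W hxW le_top le_top
    rw [map_sum]
    have : ∀ i : ι, F.res (le_top : W ≤ ⊤) (ℓ i ⊤ (g i.1))
        = ℓ i W (F.res le_top (g j.1)) := fun i => by
      rw [hres i ⊤ W le_top (g i.1), hWi i W (hWle i)]
    rw [Finset.sum_congr rfl fun i _ => this i]
    have := hsum W (F.res (le_top : W ≤ ⊤) (g j.1))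
    simpa using this
  refine ⟨surj, fun hinj => ⟨fun s₁ s₂ h => ?_, surj⟩⟩
  exact hinj (congrArg Subtype.val h)

end Stmt4
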